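/- arXiv:2603.22188 — 3 statements merged into one kernel-verified Lean document; each statement's English description precedes it below -/
import Mathlib

section
/- Fix r > 1 and an r-region plan ξ_r of G. The map that sends an unordered pair of adjacent regions {G_k, G_{k'}} ∈ AR(ξ_r) to the (r−1)-region plan obtained from ξ_r by replacing the blocks V_k and V_{k'} with V_k ∪ V_{k'} is well defined (the merged block V_k ∪ V_{k'} induces a connected subgraph of G) and is a bijection from AR(ξ_r) onto A₁(ξ_r). -/
open SimpleGraph

namespace Redist

variable {V : Type*} [Fintype V] [DecidableEq V]

/-- The subgraph of `G` induced by the vertex set `s` (the graph `G[s]`). -/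
abbrev ind (G : SimpleGraph V) (s : Set V) : G.Subgraph :=
  (⊤ : G.Subgraph).induce s

/-- `T` is a spanning tree of the subgraph `H` of `G`. -/
def IsSpanningTreeOf (G : SimpleGraph V) (T H : G.Subgraph) : Prop :=
  T ≤ H ∧ T.verts = H.verts ∧ T.coe.IsTree

/-- `τ H`: the number of spanning trees of the subgraph `H`. -/
noncomputable def tau (G : SimpleGraph V) (H : G.Subgraph) : ℕ :=
  {T : G.Subgraph | IsSpanningTreeOf G T H}.ncard

/-- `C(s, t)`: the set of edges of `G` with one endpoint in `s` and the other in `t`. -/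
def crossEdges (G : SimpleGraph V) (s t : Set V) : Set (Sym2 V) :=
  {e | e ∈ G.edgeSet ∧ ∃ u v : V, e = s(u, v) ∧ u ∈ s ∧ v ∈ t}

/-- The subgraph obtained from `H` by adding the edges in `E'` (that are edges of `G`). -/
def withEdges (G : SimpleGraph V) (H : G.Subgraph) (E' : Set (Sym2 V)) : G.Subgraph where
  verts := H.verts ∪ {v | ∃ e ∈ E' ∩ G.edgeSet, v ∈ e}
  Adj u v := H.Adj u v ∨ (s(u, v) ∈ E' ∧ G.Adj u v)
  adj_sub := by
    rintro u v (h | ⟨-, h⟩)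
    · exact H.adj_sub h
    · exact h
  edge_vert := by
    rintro u v (h | ⟨h, hG⟩)
    · exact Or.inl (H.edge_vert h)
    · exact Or.inr ⟨s(u, v), ⟨h, hG⟩, Sym2.mem_mk_left u v⟩
  symm := by
    constructor
    rintro u v (h | ⟨h, hG⟩)
    · exact Or.inl (H.adj_symm h)
    · exact Or.inr ⟨by rwa [Sym2.eq_swap], hG.symm⟩

/-- A plan with `r` regions: a partition of the vertex set into `r` nonempty blocks,
each inducing a connected subgraph. -/
structure Plan (G : SimpleGraph V) (r : ℕ) where
  blocks : Set (Set V)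
  ncard_blocks : blocks.ncard = r
  blocks_nonempty : ∀ B ∈ blocks, B.Nonempty
  blocks_disjoint : ∀ B ∈ blocks, ∀ B' ∈ blocks, B ≠ B' → Disjoint B B'
  blocks_cover : ∀ v : V, ∃ B ∈ blocks, v ∈ B
  blocks_connected : ∀ B ∈ blocks, (ind G B).Connected

/-- `ξp` is a 1-region ancestor of `ξr`: exactly one region of `ξp` is not a region of `ξr`. -/
def IsAncestor (G : SimpleGraph V) {r : ℕ} (ξp : Plan G (r - 1)) (ξr : Plan G r) : Prop :=
  (ξp.blocks \ ξr.blocks).ncard = 1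

/-- An `r`-region forest plan: `r` vertex-disjoint trees covering all of `V`. -/
structure ForestPlan (G : SimpleGraph V) (r : ℕ) where
  trees : Set G.Subgraph
  ncard_trees : trees.ncard = r
  isTree : ∀ T ∈ trees, T.coe.IsTree
  trees_disjoint : ∀ T ∈ trees, ∀ T' ∈ trees, T ≠ T' → Disjoint T.verts T'.verts
  trees_cover : ∀ v : V, ∃ T ∈ trees, v ∈ T.verts

/-- The induced plan of a forest plan (as a family of blocks). -/
def forestBlocks (G : SimpleGraph V) {r : ℕ} (F : ForestPlan G r) : Set (Set V) :=
  Subgraph.verts '' F.trees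

/-- `Fp` is a 1-region tree ancestor of `Fr`. -/
def ForestAncestor (G : SimpleGraph V) {r : ℕ} (Fp : ForestPlan G (r - 1))
    (Fr : ForestPlan G r) : Prop :=
  (Fp.trees \ Fr.trees).ncard = 1

variable {A : Type*}

/-- The set of administrative units meeting the vertex set `s`. -/
def unitSet (η : V → A) (s : Set V) : Set A := {a | (s ∩ η ⁻¹' {a}).Nonempty}

/-- A block is hierarchically connected: its intersection with each administrative unit has
at most one connected component. -/
def HierConnectedBlock (G : SimpleGraph V) (η : V → A) (B : Set V) : Prop :=
  ∀ a : A, (ind G (B ∩ η ⁻¹' {a})).coe.Preconnected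

/-- `T` is an `η`-hierarchical tree on the region induced by `B`. -/
def IsHierTree (G : SimpleGraph V) (η : V → A) (T : G.Subgraph) (B : Set V) : Prop :=
  IsSpanningTreeOf G T (ind G B) ∧
    ∀ a : A, (B ∩ η ⁻¹' {a}).Nonempty →
      IsSpanningTreeOf G (T.induce (B ∩ η ⁻¹' {a})) (ind G (B ∩ η ⁻¹' {a}))

/-- Two blocks are administratively adjacent. -/
def AdminAdj (G : SimpleGraph V) (η : V → A) (B B' : Set V) : Prop :=
  ∃ a : A, ∃ u v : V, G.Adj u v ∧ u ∈ B ∩ η ⁻¹' {a} ∧ v ∈ B' ∩ η ⁻¹' {a}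

/-- `S` is (the set of regions of) a connected component of the administrative adjacency
graph of the plan with blocks `blocks`. -/
def IsAdminComponent (G : SimpleGraph V) (η : V → A) (blocks S : Set (Set V)) : Prop :=
  S ⊆ blocks ∧ S.Nonempty ∧
    (∀ B ∈ S, ∀ B' ∈ S,
      Relation.ReflTransGen (fun X Y => X ∈ S ∧ Y ∈ S ∧ AdminAdj G η X Y) B B') ∧
    ∀ B ∈ S, ∀ B' ∈ blocks, B' ∉ S → ¬AdminAdj G η B B'

/-- The number of connected components of the subgraph induced by `s`. -/
noncomputable def numComponents (G : SimpleGraph V) (s : Set V) : ℕ :=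
  Nat.card ((ind G s).coe.ConnectedComponent)

/-- The number of administrative splits of a family `S` of blocks. -/
noncomputable def splits [Fintype A] (G : SimpleGraph V) (η : V → A) (S : Set (Set V)) : ℕ :=
  (∑ᶠ a : A, ∑ᶠ B ∈ S, numComponents G (B ∩ η ⁻¹' {a})) -
    {a : A | ∃ B ∈ S, (B ∩ η ⁻¹' {a}).Nonempty}.ncard

/-- `T` is a hierarchical plan tree for the plan with blocks `blocks`. -/
def IsHierPlanTree (G : SimpleGraph V) (η : V → A) (T : G.Subgraph)
    (blocks : Set (Set V)) : Prop :=
  IsHierTree G η T Set.univ ∧ ∀ B ∈ blocks, IsHierTree G η (T.induce B) B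

/-- The plan with blocks `blocks` is hierarchical. -/
def IsHierPlanBlocks (G : SimpleGraph V) (η : V → A) (blocks : Set (Set V)) : Prop :=
  ∃ T : G.Subgraph, IsHierPlanTree G η T blocks

/-- The effective region tree boundary length between two vertex-disjoint trees. -/
noncomputable def EffB (G : SimpleGraph V) (p : G.Subgraph → Sym2 V → ℝ)
    (Tk Tk' : G.Subgraph) : ℝ :=
  ∑ᶠ e ∈ crossEdges G Tk.verts Tk'.verts, p (withEdges G (Tk ⊔ Tk') {e}) e


lemma Plan.ext' {G : SimpleGraph V} {r : ℕ} {ξ ξ' : Plan G r}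
    (h : ξ.blocks = ξ'.blocks) : ξ = ξ' := by
  cases ξ; cases ξ'; simp_all

lemma merged_not_mem {G : SimpleGraph V} {r : ℕ} (ξr : Plan G r) {Bk Bk' : Set V}
    (hBk : Bk ∈ ξr.blocks) (hBk' : Bk' ∈ ξr.blocks) (hne : Bk ≠ Bk') :
    Bk ∪ Bk' ∉ ξr.blocks := by
  intro hmem
  have hdisj := ξr.blocks_disjoint Bk hBk Bk' hBk' hne
  obtain ⟨x, hx⟩ := ξr.blocks_nonempty Bk' hBk'
  have hne2 : Bk ∪ Bk' ≠ Bk := by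
    intro h
    exact (hdisj.ne_of_mem (h ▸ Or.inr hx) hx) rfl
  have := ξr.blocks_disjoint (Bk ∪ Bk') hmem Bk hBk hne2
  obtain ⟨y, hy⟩ := ξr.blocks_nonempty Bk hBk
  exact (this.ne_of_mem (Or.inl hy) hy) rfl

lemma connected_union {G : SimpleGraph V} {B B' : Set V}
    (hB : (ind G B).Connected) (hB' : (ind G B').Connected)
    {u v : V} (hu : u ∈ B) (hv : v ∈ B') (huv : G.Adj u v) :
    (ind G (B ∪ B')).Connected := by
  have h1 : (ind G B ⊔ G.subgraphOfAdj huv).Connected := by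
    refine SimpleGraph.Subgraph.connected_sup hB.preconnected (SimpleGraph.Subgraph.subgraphOfAdj_connected huv).preconnected ⟨u, ?_, ?_⟩
    · exact hu
    · simp
  have h2 : ((ind G B ⊔ G.subgraphOfAdj huv) ⊔ ind G B').Connected := by
    refine SimpleGraph.Subgraph.connected_sup h1.preconnected hB'.preconnected ⟨v, Or.inr ?_, hv⟩
    simp
  refine h2.mono ?_ ?_
  · refine sup_le (sup_le ?_ ?_) ?_
    · exact SimpleGraph.Subgraph.induce_mono le_rfl Set.subset_union_left
    · constructor
      · intro x hx
        simp only [SimpleGraph.subgraphOfAdj_verts, Set.mem_insert_iff,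
          Set.mem_singleton_iff] at hx
        rcases hx with rfl | rfl
        · exact Or.inl hu
        · exact Or.inr hv
      · intro a b hab
        simp only [SimpleGraph.subgraphOfAdj_adj] at hab
        refine ⟨?_, ?_, ?_⟩
        · rcases Sym2.eq_iff.mp hab with ⟨rfl, rfl⟩ | ⟨rfl, rfl⟩
          · exact Or.inl hu
          · exact Or.inr hv
        · rcases Sym2.eq_iff.mp hab with ⟨rfl, rfl⟩ | ⟨rfl, rfl⟩
          · exact Or.inr hv
          · exact Or.inl hu
        · have : G.Adj a b := by
            rcases Sym2.eq_iff.mp hab with ⟨rfl, rfl⟩ | ⟨rfl, rfl⟩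
            · exact huv
            · exact huv.symm
          exact this
    · exact SimpleGraph.Subgraph.induce_mono le_rfl Set.subset_union_right
  · simp only [SimpleGraph.Subgraph.verts_sup, SimpleGraph.subgraphOfAdj_verts,
      SimpleGraph.Subgraph.induce_verts]
    apply Set.Subset.antisymm
    · rintro x (((hx | hx) | hx))
      · exact Or.inl hx
      · simp only [Set.mem_insert_iff, Set.mem_singleton_iff] at hx
        rcases hx with rfl | rfl
        · exact Or.inl hu
        · exact Or.inr hv
      · exact Or.inr hx
    · rintro x (hx | hx)
      · exact Or.inl (Or.inl hx)
      · exact Or.inr hx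

lemma cross_of_connected {G : SimpleGraph V} {B B' : Set V}
    (hd : Disjoint B B') (hB : B.Nonempty) (hB' : B'.Nonempty)
    (hc : (ind G (B ∪ B')).Connected) : (crossEdges G B B').Nonempty := by
  by_contra h
  rw [Set.not_nonempty_iff_eq_empty] at h
  have hno : ∀ u ∈ B, ∀ v ∈ B', ¬G.Adj u v := by
    intro u hu v hv hadj
    have : s(u, v) ∈ crossEdges G B B' := ⟨hadj, u, v, rfl, hu, hv⟩
    simp [h] at this
  obtain ⟨u, hu⟩ := hB
  obtain ⟨v, hv⟩ := hB'
  have hrz : ((ind G (B ∪ B')).coe).Reachable ⟨u, Or.inl hu⟩ ⟨v, Or.inr hv⟩ :=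
    hc.preconnected _ _
  obtain ⟨w⟩ := hrz
  have key : ∀ (x y : (ind G (B ∪ B')).verts) (_ : ((ind G (B ∪ B')).coe).Walk x y),
      (x : V) ∈ B → (y : V) ∈ B := by
    intro x y w
    induction w with
    | nil => exact id
    | cons hadj p ih =>
      intro hx
      rename_i a b c
      have hab : (ind G (B ∪ B')).Adj a b := hadj
      have hGab : G.Adj (a : V) (b : V) := hab.adj_sub
      have hbmem : (b : V) ∈ B ∪ B' := b.2
      rcases hbmem with hb | hb
      · exact ih hb
      · exact absurd hGab (hno _ hx _ hb)
  have := key _ _ w hu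
  exact hd.ne_of_mem this hv rfl

/-- Merging an unordered pair of adjacent regions of `ξr` yields a
well-defined element of `A₁(ξr)` (the merged block induces a connected subgraph), and
this map is a bijection from `AR(ξr)` onto `A₁(ξr)` (stated as: well-definedness with
unique resulting plan, injectivity, and surjectivity). -/
theorem stmt_6 (G : SimpleGraph V) (r : ℕ) (hr : 1 < r) (ξr : Plan G r) :
    (∀ Bk ∈ ξr.blocks, ∀ Bk' ∈ ξr.blocks, Bk ≠ Bk' → (crossEdges G Bk Bk').Nonempty →
      (ind G (Bk ∪ Bk')).Connected ∧
      ∃! ξp : Plan G (r - 1), IsAncestor G ξp ξr ∧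
        ξp.blocks = (ξr.blocks \ {Bk, Bk'}) ∪ {Bk ∪ Bk'}) ∧
    (∀ Bk ∈ ξr.blocks, ∀ Bk' ∈ ξr.blocks, ∀ Ck ∈ ξr.blocks, ∀ Ck' ∈ ξr.blocks,
      Bk ≠ Bk' → Ck ≠ Ck' →
      (crossEdges G Bk Bk').Nonempty → (crossEdges G Ck Ck').Nonempty →
      (ξr.blocks \ {Bk, Bk'}) ∪ {Bk ∪ Bk'} = (ξr.blocks \ {Ck, Ck'}) ∪ {Ck ∪ Ck'} →
      ({Bk, Bk'} : Set (Set V)) = {Ck, Ck'}) ∧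
    (∀ ξp : Plan G (r - 1), IsAncestor G ξp ξr →
      ∃ Bk ∈ ξr.blocks, ∃ Bk' ∈ ξr.blocks, Bk ≠ Bk' ∧ (crossEdges G Bk Bk').Nonempty ∧
        ξp.blocks = (ξr.blocks \ {Bk, Bk'}) ∪ {Bk ∪ Bk'}) := by
  refine ⟨?_, ?_, ?_⟩
  · -- Part 1: well-definedness
    intro Bk hBk Bk' hBk' hne hcross
    obtain ⟨e, heE, u, v, he, hu, hv⟩ := hcross
    have huv : G.Adj u v := by rw [he] at heE; exact heE
    have hconn : (ind G (Bk ∪ Bk')).Connected :=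
      connected_union (ξr.blocks_connected Bk hBk) (ξr.blocks_connected Bk' hBk') hu hv huv
    refine ⟨hconn, ?_⟩
    have hnotmem : Bk ∪ Bk' ∉ ξr.blocks := merged_not_mem ξr hBk hBk' hne
    have hpairsub : ({Bk, Bk'} : Set (Set V)) ⊆ ξr.blocks := by
      rintro B (rfl | rfl)
      · exact hBk
      · exact hBk'
    have hcard : ((ξr.blocks \ {Bk, Bk'}) ∪ {Bk ∪ Bk'}).ncard = r - 1 := by
      rw [Set.ncard_union_eq (by
        rw [Set.disjoint_singleton_right]
        exact fun h => hnotmem h.1) (Set.toFinite _) (Set.toFinite _)]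
      rw [Set.ncard_diff hpairsub (Set.toFinite _), Set.ncard_pair hne,
        ξr.ncard_blocks, Set.ncard_singleton]
      omega
    refine ⟨⟨(ξr.blocks \ {Bk, Bk'}) ∪ {Bk ∪ Bk'}, hcard, ?_, ?_, ?_, ?_⟩, ⟨?_, rfl⟩, ?_⟩
    · rintro B (⟨hB, -⟩ | hB)
      · exact ξr.blocks_nonempty B hB
      · rw [Set.mem_singleton_iff] at hB
        obtain ⟨x, hx⟩ := ξr.blocks_nonempty Bk hBk
        exact hB ▸ ⟨x, Or.inl hx⟩
    · rintro B hB B' hB' hBB'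
      rcases hB with ⟨hB, hBn⟩ | hB <;> rcases hB' with ⟨hB', hBn'⟩ | hB'
      · exact ξr.blocks_disjoint B hB B' hB' hBB'
      · rw [Set.mem_singleton_iff] at hB'; subst hB'
        simp only [Set.mem_insert_iff, Set.mem_singleton_iff, not_or] at hBn
        exact Set.disjoint_union_right.mpr
          ⟨ξr.blocks_disjoint B hB Bk hBk hBn.1, ξr.blocks_disjoint B hB Bk' hBk' hBn.2⟩
      · rw [Set.mem_singleton_iff] at hB; subst hB
        simp only [Set.mem_insert_iff, Set.mem_singleton_iff, not_or] at hBn'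
        exact (Set.disjoint_union_right.mpr
          ⟨ξr.blocks_disjoint B' hB' Bk hBk hBn'.1,
           ξr.blocks_disjoint B' hB' Bk' hBk' hBn'.2⟩).symm
      · rw [Set.mem_singleton_iff] at hB hB'
        exact absurd (hB.trans hB'.symm) hBB'
    · intro x
      obtain ⟨B, hB, hxB⟩ := ξr.blocks_cover x
      by_cases hB2 : B = Bk ∨ B = Bk'
      · refine ⟨Bk ∪ Bk', Or.inr rfl, ?_⟩
        rcases hB2 with rfl | rfl
        · exact Or.inl hxB
        · exact Or.inr hxB
      · push_neg at hB2
        exact ⟨B, Or.inl ⟨hB, by simp [hB2.1, hB2.2]⟩, hxB⟩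
    · rintro B (⟨hB, -⟩ | hB)
      · exact ξr.blocks_connected B hB
      · rw [Set.mem_singleton_iff] at hB
        exact hB ▸ hconn
    · show (((ξr.blocks \ {Bk, Bk'}) ∪ {Bk ∪ Bk'}) \ ξr.blocks).ncard = 1
      have hset : ((ξr.blocks \ {Bk, Bk'}) ∪ {Bk ∪ Bk'}) \ ξr.blocks = {Bk ∪ Bk'} := by
        ext B
        constructor
        · rintro ⟨⟨h1, -⟩ | h1, h2⟩
          · exact absurd h1 h2
          · exact h1
        · intro hmem
          rw [Set.mem_singleton_iff] at hmem
          exact ⟨Or.inr hmem, hmem ▸ hnotmem⟩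
      rw [hset, Set.ncard_singleton]
    · rintro ξp ⟨-, hblocks⟩
      exact Plan.ext' hblocks
  · -- Part 2: injectivity
    intro Bk hBk Bk' hBk' Ck hCk Ck' hCk' hneB hneC _ _ heq
    have hBnot := merged_not_mem ξr hBk hBk' hneB
    have hmem : Bk ∪ Bk' ∈ (ξr.blocks \ {Ck, Ck'}) ∪ {Ck ∪ Ck'} := by
      rw [← heq]; exact Or.inr rfl
    have hBC : Bk ∪ Bk' = Ck ∪ Ck' := by
      rcases hmem with ⟨h1, -⟩ | h1
      · exact absurd h1 hBnot
      · exact h1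
    have key : ∀ X ∈ ξr.blocks, X ⊆ Ck ∪ Ck' → X = Ck ∨ X = Ck' := by
      intro X hX hsub
      obtain ⟨x, hx⟩ := ξr.blocks_nonempty X hX
      rcases hsub hx with h | h
      · left; by_contra hne
        exact (ξr.blocks_disjoint X hX Ck hCk hne).ne_of_mem hx h rfl
      · right; by_contra hne
        exact (ξr.blocks_disjoint X hX Ck' hCk' hne).ne_of_mem hx h rfl
    have h1 := key Bk hBk (by rw [← hBC]; exact Set.subset_union_left)
    have h2 := key Bk' hBk' (by rw [← hBC]; exact Set.subset_union_right)
    rcases h1 with h1 | h1 <;> rcases h2 with h2 | h2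
    · exact absurd (h1.trans h2.symm) hneB
    · rw [h1, h2]
    · rw [h1, h2, Set.pair_comm]
    · exact absurd (h1.trans h2.symm) hneB
  · -- Part 3: surjectivity
    intro ξp hanc
    obtain ⟨D, hD⟩ := Set.ncard_eq_one.mp hanc
    have hDdiff : D ∈ ξp.blocks \ ξr.blocks := by rw [hD]; rfl
    have hDp : D ∈ ξp.blocks := hDdiff.1
    have hDnr : D ∉ ξr.blocks := hDdiff.2
    have hcard2 : (ξr.blocks \ ξp.blocks).ncard = 2 := by
      have key : ∀ s t : Set (Set V), (s \ t).ncard + (s ∩ t).ncard = s.ncard := by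
        intro s t
        rw [← Set.ncard_union_eq (Set.disjoint_of_subset_right Set.inter_subset_right
          Set.disjoint_sdiff_left) (Set.toFinite _) (Set.toFinite _), Set.diff_union_inter]
      have e1 := key ξp.blocks ξr.blocks
      have e2 := key ξr.blocks ξp.blocks
      rw [hanc, ξp.ncard_blocks] at e1
      rw [ξr.ncard_blocks, Set.inter_comm] at e2
      omega
    obtain ⟨Bk, Bk', hne, hpair⟩ := Set.ncard_eq_two.mp hcard2
    have hBkd : Bk ∈ ξr.blocks \ ξp.blocks := by rw [hpair]; exact Set.mem_insert _ _
    have hBk'd : Bk' ∈ ξr.blocks \ ξp.blocks := by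
      rw [hpair]; exact Set.mem_insert_of_mem _ rfl
    have hBkr : Bk ∈ ξr.blocks := hBkd.1
    have hBk'r : Bk' ∈ ξr.blocks := hBk'd.1
    have hDeq : D = Bk ∪ Bk' := by
      ext x
      constructor
      · intro hx
        obtain ⟨B, hB, hxB⟩ := ξr.blocks_cover x
        have hBnp : B ∉ ξp.blocks := by
          intro hBp
          have hBD : B ≠ D := fun h => hDnr (h ▸ hB)
          exact (ξp.blocks_disjoint B hBp D hDp hBD).ne_of_mem hxB hx rfl
        have hmem : B ∈ ξr.blocks \ ξp.blocks := ⟨hB, hBnp⟩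
        rw [hpair] at hmem
        rcases hmem with rfl | rfl
        · exact Or.inl hxB
        · exact Or.inr hxB
      · intro hx
        obtain ⟨C, hC, hxC⟩ := ξp.blocks_cover x
        have hCnr : C ∉ ξr.blocks := by
          intro hCr
          rcases hx with hx | hx
          · have hCBk : C ≠ Bk := fun h => hBkd.2 (h ▸ hC)
            exact (ξr.blocks_disjoint C hCr Bk hBkr hCBk).ne_of_mem hxC hx rfl
          · have hCBk' : C ≠ Bk' := fun h => hBk'd.2 (h ▸ hC)
            exact (ξr.blocks_disjoint C hCr Bk' hBk'r hCBk').ne_of_mem hxC hx rfl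
        have hmem : C ∈ ξp.blocks \ ξr.blocks := ⟨hC, hCnr⟩
        rw [hD, Set.mem_singleton_iff] at hmem
        exact hmem ▸ hxC
    have hdisj : Disjoint Bk Bk' := ξr.blocks_disjoint Bk hBkr Bk' hBk'r hne
    have hconn : (ind G (Bk ∪ Bk')).Connected := hDeq ▸ ξp.blocks_connected D hDp
    have hcross : (crossEdges G Bk Bk').Nonempty :=
      cross_of_connected hdisj (ξr.blocks_nonempty Bk hBkr)
        (ξr.blocks_nonempty Bk' hBk'r) hconn
    refine ⟨Bk, hBkr, Bk', hBk'r, hne, hcross, ?_⟩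
    ext B
    constructor
    · intro hBp
      by_cases hBD : B = D
      · subst hBD
        exact Or.inr (by rw [Set.mem_singleton_iff]; exact hDeq)
      · have hBr : B ∈ ξr.blocks := by
          by_contra h
          have : B ∈ ξp.blocks \ ξr.blocks := ⟨hBp, h⟩
          rw [hD, Set.mem_singleton_iff] at this
          exact hBD this
        refine Or.inl ⟨hBr, ?_⟩
        simp only [Set.mem_insert_iff, Set.mem_singleton_iff, not_or]
        exact ⟨fun h => hBkd.2 (h ▸ hBp), fun h => hBk'd.2 (h ▸ hBp)⟩
    · rintro (⟨hBr, hBn⟩ | hB)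
      · by_contra h
        have : B ∈ ξr.blocks \ ξp.blocks := ⟨hBr, h⟩
        rw [hpair] at this
        exact hBn this
      · rw [Set.mem_singleton_iff] at hB
        rw [hB, ← hDeq]
        exact hDp

end Redist
end

section
/- Fix r > 1 and an r-region forest plan F_r of G. Call two trees T_k, T_{k'} ∈ F_r adjacent if C(T_k, T_{k'}) ≠ ∅. Then the map sending F_{r-1} ∈ A₁(F_r) to its old tree is a bijection from A₁(F_r) onto the set of trees T_ℓ such that, for some unordered pair of adjacent trees {T_k, T_{k'}} of F_r, T_ℓ is a spanning tree of G[V(T_k) ∪ V(T_{k'})]. In particular, for each unordered pair of adjacent trees {T_k, T_{k'}} of F_r there are exactly τ(G[V(T_k) ∪ V(T_{k'})]) elements of A₁(F_r) whose old tree has vertex set V(T_k) ∪ V(T_{k'}). -/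
open SimpleGraph

namespace Redist

variable {V : Type*} [Fintype V] [DecidableEq V]

variable {A : Type*}

section Helpers13

variable {G : SimpleGraph V}

instance : Finite G.Subgraph :=
  Finite.of_injective (fun H => (H.verts, H.Adj)) (fun H H' h => by
    obtain ⟨h1, h2⟩ := Prod.mk.injEq .. ▸ h
    exact SimpleGraph.Subgraph.ext h1 h2)

lemma tree_verts_nonempty {T : G.Subgraph} (h : T.coe.IsTree) : T.verts.Nonempty :=
  Set.nonempty_coe_sort.mp h.isConnected.nonempty

lemma forestPlan_ext {r : ℕ} {F F' : ForestPlan G r} (h : F.trees = F'.trees) : F = F' := by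
  cases F; cases F'; simp only at h; subst h; rfl

lemma isSpanningTree_of_verts {T : G.Subgraph} {s : Set V} (hv : T.verts = s)
    (ht : T.coe.IsTree) : IsSpanningTreeOf G T (ind G s) := by
  refine ⟨?_, by simp [hv], ht⟩
  constructor
  · simp [hv]
  · intro u v h
    exact ⟨hv ▸ T.edge_vert h, hv ▸ T.edge_vert h.symm, T.adj_sub h⟩

lemma exists_cross_edge {T : G.Subgraph} (hc : T.coe.Connected) {A B : Set V}
    (hU : T.verts = A ∪ B) (hd : Disjoint A B) (hA : A.Nonempty) (hB : B.Nonempty) :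
    (crossEdges G A B).Nonempty := by
  obtain ⟨a, ha⟩ := hA
  obtain ⟨b, hb⟩ := hB
  have haT : a ∈ T.verts := by rw [hU]; exact Or.inl ha
  have hbT : b ∈ T.verts := by rw [hU]; exact Or.inr hb
  obtain ⟨w⟩ := hc.preconnected ⟨a, haT⟩ ⟨b, hbT⟩
  suffices h : ∀ (u v : T.verts) (_ : T.coe.Walk u v), (u : V) ∈ A → (v : V) ∈ B →
      ∃ x y, G.Adj x y ∧ x ∈ A ∧ y ∈ B by
    obtain ⟨x, y, hxy, hx, hy⟩ := h _ _ w ha hb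
    exact ⟨s(x, y), G.mem_edgeSet.mpr hxy, x, y, rfl, hx, hy⟩
  intro u v w
  induction w with
  | nil => exact fun hu hv => absurd hv (Set.disjoint_left.mp hd hu)
  | @cons u' w' v' h p ih =>
    intro hu hv
    rcases (by rw [← hU]; exact w'.2 : (w' : V) ∈ A ∪ B) with h' | h'
    · exact ih h' hv
    · exact ⟨u', w', T.adj_sub h, hu, h'⟩

lemma diff_singleton {r : ℕ} {Fr : ForestPlan G r} {Fp : ForestPlan G (r - 1)}
    (hA : ForestAncestor G Fp Fr) {Tl : G.Subgraph} (hTl : Tl ∈ Fp.trees \ Fr.trees) :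
    Fp.trees \ Fr.trees = {Tl} := by
  obtain ⟨a, ha⟩ := Set.ncard_eq_one.mp hA
  rw [ha] at hTl ⊢
  rw [Set.mem_singleton_iff.mp hTl]

lemma old_tree_spec {r : ℕ} (hr : 1 < r) (Fr : ForestPlan G r) (Fp : ForestPlan G (r - 1))
    (hA : ForestAncestor G Fp Fr) {Tl : G.Subgraph} (hTl : Tl ∈ Fp.trees \ Fr.trees) :
    ∃ Tk ∈ Fr.trees, ∃ Tk' ∈ Fr.trees, Tk ≠ Tk' ∧ Tl.verts = Tk.verts ∪ Tk'.verts := by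
  have hdiff : Fp.trees \ Fr.trees = {Tl} := diff_singleton hA hTl
  -- cardinality of the intersection
  have hsplit : (Fp.trees ∩ Fr.trees) ∪ (Fp.trees \ Fr.trees) = Fp.trees :=
    Set.inter_union_diff _ _
  have hdisj1 : Disjoint (Fp.trees ∩ Fr.trees) (Fp.trees \ Fr.trees) :=
    Set.disjoint_left.mpr fun x hx hx' => hx'.2 hx.2
  have hcard1 : (Fp.trees ∩ Fr.trees).ncard + 1 = r - 1 := by
    have := Set.ncard_union_eq hdisj1 (Set.toFinite _) (Set.toFinite _)
    rw [hsplit, Fp.ncard_trees, hdiff] at this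
    simpa using this.symm
  -- cardinality of Fr.trees \ Fp.trees
  have hsplit2 : (Fr.trees ∩ Fp.trees) ∪ (Fr.trees \ Fp.trees) = Fr.trees :=
    Set.inter_union_diff _ _
  have hdisj2 : Disjoint (Fr.trees ∩ Fp.trees) (Fr.trees \ Fp.trees) :=
    Set.disjoint_left.mpr fun x hx hx' => hx'.2 hx.2
  have hcard2 : (Fr.trees \ Fp.trees).ncard = 2 := by
    have := Set.ncard_union_eq hdisj2 (Set.toFinite _) (Set.toFinite _)
    rw [hsplit2, Fr.ncard_trees, Set.inter_comm] at this
    omega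
  obtain ⟨Tk, Tk', hne, hD⟩ := Set.ncard_eq_two.mp hcard2
  have hk : Tk ∈ Fr.trees := by
    have : Tk ∈ Fr.trees \ Fp.trees := by rw [hD]; exact Or.inl rfl
    exact this.1
  have hk' : Tk' ∈ Fr.trees := by
    have : Tk' ∈ Fr.trees \ Fp.trees := by rw [hD]; exact Or.inr rfl
    exact this.1
  refine ⟨Tk, hk, Tk', hk', hne, ?_⟩
  ext v
  constructor
  · intro hv
    obtain ⟨T, hT, hvT⟩ := Fr.trees_cover v
    by_cases hTp : T ∈ Fp.trees
    · exfalso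
      have hTne : T ≠ Tl := fun h => hTl.2 (h ▸ hT)
      exact Set.disjoint_left.mp (Fp.trees_disjoint T hTp Tl hTl.1 hTne) hvT hv
    · have : T ∈ Fr.trees \ Fp.trees := ⟨hT, hTp⟩
      rw [hD] at this
      rcases this with rfl | rfl
      · exact Or.inl hvT
      · exact Or.inr hvT
  · intro hv
    obtain ⟨T, hT, hvT⟩ := Fp.trees_cover v
    have hTFr : T ∉ Fr.trees → T = Tl := fun h => by
      have : T ∈ Fp.trees \ Fr.trees := ⟨hT, h⟩
      rw [hdiff] at this; exact this
    by_cases hT' : T ∈ Fr.trees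
    · exfalso
      rcases hv with hv | hv
      · have hne' : T ≠ Tk := by
          intro h; subst h
          have : T ∈ Fr.trees \ Fp.trees := by rw [hD]; exact Or.inl rfl
          exact this.2 hT
        exact Set.disjoint_left.mp (Fr.trees_disjoint T hT' Tk hk hne') hvT hv
      · have hne' : T ≠ Tk' := by
          intro h; subst h
          have : T ∈ Fr.trees \ Fp.trees := by rw [hD]; exact Or.inr rfl
          exact this.2 hT
        exact Set.disjoint_left.mp (Fr.trees_disjoint T hT' Tk' hk' hne') hvT hv
    · exact (hTFr hT') ▸ hvT

lemma ancestor_trees_eq {r : ℕ} (Fr : ForestPlan G r) (Fp : ForestPlan G (r - 1))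
    (hA : ForestAncestor G Fp Fr) {Tl : G.Subgraph} (hTl : Tl ∈ Fp.trees \ Fr.trees) :
    Fp.trees = {T ∈ Fr.trees | Disjoint T.verts Tl.verts} ∪ {Tl} := by
  have hdiff : Fp.trees \ Fr.trees = {Tl} := diff_singleton hA hTl
  ext T
  constructor
  · intro hT
    by_cases hTe : T = Tl
    · exact Or.inr (by simp [hTe])
    · left
      have hTFr : T ∈ Fr.trees := by
        by_contra h
        have : T ∈ Fp.trees \ Fr.trees := ⟨hT, h⟩
        rw [hdiff] at this
        exact hTe this
      exact ⟨hTFr, Fp.trees_disjoint T hT Tl hTl.1 hTe⟩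
  · rintro (⟨hTFr, hdisj⟩ | hTe)
    · obtain ⟨v, hv⟩ := tree_verts_nonempty (Fr.isTree T hTFr)
      obtain ⟨T'', hT'', hv''⟩ := Fp.trees_cover v
      have h1 : T'' ≠ Tl := fun h => Set.disjoint_left.mp hdisj hv (h ▸ hv'')
      have hT''Fr : T'' ∈ Fr.trees := by
        by_contra h
        have : T'' ∈ Fp.trees \ Fr.trees := ⟨hT'', h⟩
        rw [hdiff] at this
        exact h1 this
      have : T = T'' := by
        by_contra hne
        exact Set.disjoint_left.mp (Fr.trees_disjoint T hTFr T'' hT''Fr hne) hv hv''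
      exact this ▸ hT''
    · have : T = Tl := hTe
      exact this ▸ hTl.1

lemma exists_ancestor {r : ℕ} (hr : 1 < r) (Fr : ForestPlan G r) {Tk Tk' : G.Subgraph}
    (hk : Tk ∈ Fr.trees) (hk' : Tk' ∈ Fr.trees) (hne : Tk ≠ Tk')
    {Tl : G.Subgraph} (hTl : IsSpanningTreeOf G Tl (ind G (Tk.verts ∪ Tk'.verts))) :
    ∃ Fp : ForestPlan G (r - 1), ForestAncestor G Fp Fr ∧ Tl ∈ Fp.trees \ Fr.trees := by
  have hTlv : Tl.verts = Tk.verts ∪ Tk'.verts := by simpa using hTl.2.1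
  have hTltree : Tl.coe.IsTree := hTl.2.2
  obtain ⟨a, haTk⟩ := tree_verts_nonempty (Fr.isTree Tk hk)
  obtain ⟨b, hbTk'⟩ := tree_verts_nonempty (Fr.isTree Tk' hk')
  have hdisj : Disjoint Tk.verts Tk'.verts := Fr.trees_disjoint Tk hk Tk' hk' hne
  have hTlnot : Tl ∉ Fr.trees := by
    intro hmem
    have h1 : Tl ≠ Tk := by
      intro h
      have : b ∈ Tk.verts := by rw [← h, hTlv]; exact Or.inr hbTk'
      exact Set.disjoint_left.mp hdisj this hbTk'
    have h2 : Tl ≠ Tk' := by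
      intro h
      have : a ∈ Tk'.verts := by rw [← h, hTlv]; exact Or.inl haTk
      exact Set.disjoint_left.mp hdisj haTk this
    have : a ∈ Tl.verts := by rw [hTlv]; exact Or.inl haTk
    exact Set.disjoint_left.mp (Fr.trees_disjoint Tl hmem Tk hk h1) this haTk
  have hTl_notmem : Tl ∉ Fr.trees \ {Tk, Tk'} := fun h => hTlnot h.1
  have hpair_sub : ({Tk, Tk'} : Set G.Subgraph) ⊆ Fr.trees := by
    rintro x (rfl | rfl)
    · exact hk
    · exact hk'
  refine ⟨⟨insert Tl (Fr.trees \ {Tk, Tk'}), ?_, ?_, ?_, ?_⟩, ?_, ?_⟩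
  · -- cardinality
    rw [Set.ncard_insert_of_notMem hTl_notmem (Set.toFinite _),
      Set.ncard_diff hpair_sub (Set.toFinite _), Set.ncard_pair hne, Fr.ncard_trees]
    omega
  · -- trees
    intro T hT
    rcases Set.mem_insert_iff.mp hT with rfl | hT'
    · exact hTltree
    · exact Fr.isTree T hT'.1
  · -- disjoint
    intro T hT T' hT' hTT'
    have key : ∀ S, S ∈ Fr.trees \ ({Tk, Tk'} : Set G.Subgraph) →
        Disjoint Tl.verts S.verts := by
      intro S hS
      have hS1 : S ≠ Tk := fun h => hS.2 (Or.inl h)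
      have hS2 : S ≠ Tk' := fun h => hS.2 (Or.inr h)
      rw [hTlv, Set.disjoint_union_left]
      exact ⟨Fr.trees_disjoint Tk hk S hS.1 (fun h => hS1 h.symm),
        Fr.trees_disjoint Tk' hk' S hS.1 (fun h => hS2 h.symm)⟩
    rcases Set.mem_insert_iff.mp hT with rfl | hT1
    · rcases Set.mem_insert_iff.mp hT' with rfl | hT1'
      · exact absurd rfl hTT'
      · exact key T' hT1'
    · rcases Set.mem_insert_iff.mp hT' with rfl | hT1'
      · exact (key T hT1).symm
      · exact Fr.trees_disjoint T hT1.1 T' hT1'.1 hTT'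
  · -- cover
    intro v
    obtain ⟨T, hT, hv⟩ := Fr.trees_cover v
    by_cases h1 : T = Tk
    · exact ⟨Tl, Set.mem_insert _ _, by rw [hTlv]; exact Or.inl (h1 ▸ hv)⟩
    by_cases h2 : T = Tk'
    · exact ⟨Tl, Set.mem_insert _ _, by rw [hTlv]; exact Or.inr (h2 ▸ hv)⟩
    · exact ⟨T, Set.mem_insert_iff.mpr (Or.inr ⟨hT, by
        rintro (h | h)
        · exact h1 h
        · exact h2 h⟩), hv⟩
  · -- ancestor
    show (insert Tl (Fr.trees \ {Tk, Tk'}) \ Fr.trees).ncard = 1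
    have : insert Tl (Fr.trees \ {Tk, Tk'}) \ Fr.trees = {Tl} := by
      ext x
      constructor
      · rintro ⟨hx1, hx2⟩
        rcases Set.mem_insert_iff.mp hx1 with rfl | hx'
        · rfl
        · exact absurd hx'.1 hx2
      · rintro rfl
        exact ⟨Set.mem_insert _ _, hTlnot⟩
    rw [this, Set.ncard_singleton]
  · exact ⟨Set.mem_insert _ _, hTlnot⟩

end Helpers13

/-- The map sending `Fp ∈ A₁(Fr)` to its old tree is a bijection onto the
set of trees `T_ℓ` that are spanning trees of `G[V(T_k) ∪ V(T_{k'})]` for some unordered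
pair of adjacent trees of `Fr`; in particular each such pair accounts for exactly
`τ(G[V(T_k) ∪ V(T_{k'})])` ancestors. -/
theorem stmt_13 (G : SimpleGraph V) (r : ℕ) (hr : 1 < r) (Fr : ForestPlan G r) :
    -- the old tree of every ancestor is a spanning tree of a merged adjacent pair
    (∀ Fp : ForestPlan G (r - 1), ForestAncestor G Fp Fr →
      ∀ Tl ∈ Fp.trees \ Fr.trees,
        ∃ Tk ∈ Fr.trees, ∃ Tk' ∈ Fr.trees, Tk ≠ Tk' ∧
          (crossEdges G Tk.verts Tk'.verts).Nonempty ∧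
          IsSpanningTreeOf G Tl (ind G (Tk.verts ∪ Tk'.verts))) ∧
    -- injectivity
    (∀ Fp Fp' : ForestPlan G (r - 1), ForestAncestor G Fp Fr → ForestAncestor G Fp' Fr →
      ∀ Tl ∈ Fp.trees \ Fr.trees, ∀ Tl' ∈ Fp'.trees \ Fr.trees, Tl = Tl' → Fp = Fp') ∧
    -- surjectivity
    (∀ Tk ∈ Fr.trees, ∀ Tk' ∈ Fr.trees, Tk ≠ Tk' →
      (crossEdges G Tk.verts Tk'.verts).Nonempty →
      ∀ Tl : G.Subgraph, IsSpanningTreeOf G Tl (ind G (Tk.verts ∪ Tk'.verts)) →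
        ∃ Fp : ForestPlan G (r - 1), ForestAncestor G Fp Fr ∧ Tl ∈ Fp.trees \ Fr.trees) ∧
    -- the count for each adjacent pair
    (∀ Tk ∈ Fr.trees, ∀ Tk' ∈ Fr.trees, Tk ≠ Tk' →
      (crossEdges G Tk.verts Tk'.verts).Nonempty →
      {Fp : ForestPlan G (r - 1) | ForestAncestor G Fp Fr ∧
          ∃ Tl ∈ Fp.trees \ Fr.trees, Tl.verts = Tk.verts ∪ Tk'.verts}.ncard
        = tau G (ind G (Tk.verts ∪ Tk'.verts))) := by
  refine ⟨?_, ?_, ?_, ?_⟩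
  · -- part 1
    intro Fp hA Tl hTl
    obtain ⟨Tk, hk, Tk', hk', hne, hverts⟩ := old_tree_spec hr Fr Fp hA hTl
    refine ⟨Tk, hk, Tk', hk', hne, ?_, isSpanningTree_of_verts hverts (Fp.isTree Tl hTl.1)⟩
    exact exists_cross_edge (Fp.isTree Tl hTl.1).isConnected hverts
      (Fr.trees_disjoint Tk hk Tk' hk' hne)
      (tree_verts_nonempty (Fr.isTree Tk hk)) (tree_verts_nonempty (Fr.isTree Tk' hk'))
  · -- part 2
    intro Fp Fp' hA hA' Tl hTl Tl' hTl' heq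
    apply forestPlan_ext
    rw [ancestor_trees_eq Fr Fp hA hTl, ancestor_trees_eq Fr Fp' hA' hTl', heq]
  · -- part 3
    intro Tk hk Tk' hk' hne _ Tl hTl
    exact exists_ancestor hr Fr hk hk' hne hTl
  · -- part 4
    intro Tk hk Tk' hk' hne _
    set u := Tk.verts ∪ Tk'.verts with hu
    set f : ForestPlan G (r - 1) → G.Subgraph := fun Fp => sSup (Fp.trees \ Fr.trees)
      with hf
    set S := {Fp : ForestPlan G (r - 1) | ForestAncestor G Fp Fr ∧
      ∃ Tl ∈ Fp.trees \ Fr.trees, Tl.verts = u} with hS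
    have himg : f '' S = {T : G.Subgraph | IsSpanningTreeOf G T (ind G u)} := by
      ext T
      constructor
      · rintro ⟨Fp, ⟨hanc, Tl, hTlm, hvu⟩, rfl⟩
        have hdiff : Fp.trees \ Fr.trees = {Tl} := diff_singleton hanc hTlm
        show IsSpanningTreeOf G (sSup (Fp.trees \ Fr.trees)) (ind G u)
        rw [hdiff, sSup_singleton]
        exact isSpanningTree_of_verts hvu (Fp.isTree Tl hTlm.1)
      · intro hT
        obtain ⟨Fp, hanc, hmem⟩ := exists_ancestor hr Fr hk hk' hne hT
        have hdiff : Fp.trees \ Fr.trees = {T} := diff_singleton hanc hmem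
        refine ⟨Fp, ⟨hanc, T, hmem, by simpa using hT.2.1⟩, ?_⟩
        show sSup (Fp.trees \ Fr.trees) = T
        rw [hdiff, sSup_singleton]
    have hinj : Set.InjOn f S := by
      intro Fp hFp Fp' hFp' heq
      obtain ⟨hanc, Tl, hTlm, _⟩ := hFp
      obtain ⟨hanc', Tl', hTlm', _⟩ := hFp'
      have d : Fp.trees \ Fr.trees = {Tl} := diff_singleton hanc hTlm
      have d' : Fp'.trees \ Fr.trees = {Tl'} := diff_singleton hanc' hTlm'
      have hTT : Tl = Tl' := by
        have : sSup (Fp.trees \ Fr.trees) = sSup (Fp'.trees \ Fr.trees) := heq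
        rwa [d, d', sSup_singleton, sSup_singleton] at this
      apply forestPlan_ext
      rw [ancestor_trees_eq Fr Fp hanc hTlm, ancestor_trees_eq Fr Fp' hanc' hTlm', hTT]
    show S.ncard = tau G (ind G u)
    rw [tau, ← himg, Set.ncard_image_of_injOn hinj]

end Redist
end

section
/- Let G_a = G[V_a] and G_b = G[V_b] be vertex-disjoint, adjacent, hierarchically connected regions of G; let T_a and T_b be η-hierarchical trees on G_a and G_b respectively; let e be an edge of G with endpoint u ∈ V_a and endpoint v ∈ V_b; set x = η(u), y = η(v), U_a = {a ∈ A : V_a ∩ η⁻¹(a) ≠ ∅}, U_b = {a ∈ A : V_b ∩ η⁻¹(a) ≠ ∅}, and T = T_a ∪ {e} ∪ T_b. Then: (1) if x = y and U_a ∩ U_b = {x}, then T is an η-hierarchical tree on G[V_a ∪ V_b]; (2) if x ≠ y and U_a ∩ U_b = ∅, then T is an η-hierarchical tree on G[V_a ∪ V_b]; (3) if |U_a ∩ U_b| > 1, then T is not an η-hierarchical tree on G[V_a ∪ V_b]; (4) if x ≠ y and U_a ∩ U_b ≠ ∅, then T is not an η-hierarchical tree on G[V_a ∪ V_b]. -/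
open SimpleGraph

namespace Redist

variable {V : Type*} [Fintype V] [DecidableEq V]

variable {A : Type*}

section AuxGraph

variable {W : Type*}

lemma reach_side {K : SimpleGraph W} {P : Set W}
    (h : ∀ ⦃a b : W⦄, K.Adj a b → (a ∈ P ↔ b ∈ P)) :
    ∀ {x y : W}, K.Reachable x y → x ∈ P → y ∈ P := by
  intro x y hr
  obtain ⟨p⟩ := hr
  induction p with
  | nil => exact id
  | cons h0 p ih => exact fun hx => ih ((h h0).mp hx)

lemma edges_side {P Q : Set W} (hPQ : Disjoint P Q) {Ga Gb H : SimpleGraph W}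
    (haP : ∀ ⦃a b : W⦄, Ga.Adj a b → a ∈ P ∧ b ∈ P)
    (hbQ : ∀ ⦃a b : W⦄, Gb.Adj a b → a ∈ Q ∧ b ∈ Q)
    (hH : ∀ ⦃a b : W⦄, H.Adj a b → Ga.Adj a b ∨ Gb.Adj a b) :
    ∀ {x y : W} (p : H.Walk x y), x ∈ P → ∀ e ∈ p.edges, e ∈ Ga.edgeSet := by
  intro x y p
  induction p with
  | nil => intro _ e he; simp [Walk.edges_nil] at he
  | cons h0 p ih =>
    intro hx e he
    rcases hH h0 with ha | hb
    · rw [Walk.edges_cons, List.mem_cons] at he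
      rcases he with rfl | he'
      · exact ha
      · exact ih (haP ha).2 e he'
    · exact absurd (hbQ hb).1 (Set.disjoint_left.mp hPQ hx)

lemma sup_acyclic {P Q : Set W} (hPQ : Disjoint P Q) {Ga Gb : SimpleGraph W}
    (haP : ∀ ⦃a b : W⦄, Ga.Adj a b → a ∈ P ∧ b ∈ P)
    (hbQ : ∀ ⦃a b : W⦄, Gb.Adj a b → a ∈ Q ∧ b ∈ Q)
    (haA : Ga.IsAcyclic) (hbA : Gb.IsAcyclic) : (Ga ⊔ Gb).IsAcyclic := by
  intro w c hc
  cases c with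
  | nil => exact Walk.IsCycle.not_of_nil hc
  | cons h0 q =>
    rcases (sup_adj _ _ _ _).mp h0 with ha | hb
    · have hed := edges_side hPQ haP hbQ (fun a b h => (sup_adj _ _ _ _).mp h)
        (Walk.cons h0 q) (haP ha).1
      exact haA _ (hc.transfer hed)
    · have hed := edges_side hPQ.symm hbQ haP (fun a b h => ((sup_adj _ _ _ _).mp h).symm)
        (Walk.cons h0 q) (hbQ hb).1
      exact hbA _ (hc.transfer hed)

lemma join_acyclic {P Q : Set W} (hPQ : Disjoint P Q) {u v : W} (hu : u ∈ P) (hv : v ∈ Q)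
    {Ga Gb H : SimpleGraph W}
    (haP : ∀ ⦃a b : W⦄, Ga.Adj a b → a ∈ P ∧ b ∈ P)
    (hbQ : ∀ ⦃a b : W⦄, Gb.Adj a b → a ∈ Q ∧ b ∈ Q)
    (haA : Ga.IsAcyclic) (hbA : Gb.IsAcyclic)
    (hadj : ∀ a b : W, H.Adj a b ↔ Ga.Adj a b ∨ Gb.Adj a b ∨ s(a, b) = s(u, v)) :
    H.IsAcyclic := by
  have hbridge : H.IsBridge s(u, v) := by
    rw [isBridge_iff]
    intro hr
    have hinv : ∀ ⦃a b : W⦄, (H \ fromEdgeSet {s(u, v)}).Adj a b → (a ∈ P ↔ b ∈ P) := by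
      intro a b hab
      rw [sdiff_adj] at hab
      obtain ⟨hH, hne⟩ := hab
      rcases (hadj a b).mp hH with ha | hb | he
      · exact iff_of_true (haP ha).1 (haP ha).2
      · exact iff_of_false (fun h => Set.disjoint_left.mp hPQ h (hbQ hb).1)
          (fun h => Set.disjoint_left.mp hPQ h (hbQ hb).2)
      · exact absurd ((fromEdgeSet_adj _).mpr ⟨Set.mem_singleton_iff.mpr he, hH.ne⟩) hne
    exact Set.disjoint_left.mp hPQ (reach_side hinv hr hu) hv
  intro w c hc
  by_cases he : s(u, v) ∈ c.edges
  · exact (isBridge_iff_adj_and_forall_cycle_notMem (c.edges_subset_edgeSet he)).mp hbridge c hc he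
  · have hKE : ∀ e ∈ c.edges, e ∈ (Ga ⊔ Gb).edgeSet := by
      intro e hee
      have heE : e ∈ H.edgeSet := c.edges_subset_edgeSet hee
      induction e using Sym2.ind with
      | _ a b =>
        rcases (hadj a b).mp (H.mem_edgeSet.mp heE) with ha | hb | heq
        · exact (Ga ⊔ Gb).mem_edgeSet.mpr (Or.inl ha)
        · exact (Ga ⊔ Gb).mem_edgeSet.mpr (Or.inr hb)
        · exact absurd (heq ▸ hee) he
    exact sup_acyclic hPQ haP hbQ haA hbA (c.transfer _ hKE) (hc.transfer hKE)

variable {G : SimpleGraph W}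

/-- The inclusion homomorphism from the coercion of a subgraph to its spanning coercion. -/
def sHom (H : G.Subgraph) : H.coe →g H.spanningCoe :=
  ⟨Subtype.val, fun h => h⟩

lemma sHom_injective (H : G.Subgraph) : Function.Injective (sHom H) :=
  Subtype.val_injective

lemma lift_spanning_walk {H : G.Subgraph} :
    ∀ {x y : W} (p : H.spanningCoe.Walk x y) (hx : x ∈ H.verts) (hy : y ∈ H.verts),
      ∃ q : H.coe.Walk ⟨x, hx⟩ ⟨y, hy⟩, q.map (sHom H) = p := by
  intro x y p
  induction p with
  | nil => exact fun hx hy => ⟨Walk.nil, rfl⟩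
  | cons h0 p ih =>
    intro hx hy
    obtain ⟨q, hq⟩ := ih (H.edge_vert (H.adj_symm (show H.Adj _ _ from h0))) hy
    exact ⟨Walk.cons (by exact h0) q, by subst hq; rfl⟩

lemma coe_acyclic_iff {H : G.Subgraph} : H.coe.IsAcyclic ↔ H.spanningCoe.IsAcyclic := by
  constructor
  · intro h w c hc
    have hw : w ∈ H.verts := by
      cases c with
      | nil => exact absurd rfl hc.ne_nil
      | cons h0 q => exact H.edge_vert h0
    obtain ⟨q, hq⟩ := lift_spanning_walk c hw hw
    rw [← hq] at hc
    exact h q ((Walk.map_isCycle_iff_of_injective (sHom_injective H)).mp hc)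
  · intro h w c hc
    exact h _ (hc.map (sHom_injective H))

end AuxGraph

variable {G : SimpleGraph V}

lemma adj_side {S : Set V} {T : G.Subgraph} (hT : T ≤ ind G S) {a b : V} (h : T.Adj a b) :
    a ∈ S ∧ b ∈ S := by
  have h2 := hT.2 h
  rw [Subgraph.induce_adj] at h2
  exact ⟨h2.1, h2.2.1⟩

lemma join_spanning (G : SimpleGraph V) {Va Vb : Set V} (hdisj : Disjoint Va Vb)
    {u v : V} (huv : G.Adj u v) (hu : u ∈ Va) (hv : v ∈ Vb)
    {Ta Tb : G.Subgraph} (hTa : IsSpanningTreeOf G Ta (ind G Va))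
    (hTb : IsSpanningTreeOf G Tb (ind G Vb)) :
    IsSpanningTreeOf G (Ta ⊔ Tb ⊔ G.subgraphOfAdj huv) (ind G (Va ∪ Vb)) := by
  obtain ⟨hla, hva, hta⟩ := hTa
  obtain ⟨hlb, hvb, htb⟩ := hTb
  have hva' : Ta.verts = Va := hva
  have hvb' : Tb.verts = Vb := hvb
  have hsub : ({u, v} : Set V) ⊆ Va ∪ Vb := by
    rintro w (rfl | rfl)
    · exact Or.inl hu
    · exact Or.inr hv
  have hle : Ta ⊔ Tb ⊔ G.subgraphOfAdj huv ≤ ind G (Va ∪ Vb) := by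
    refine sup_le (sup_le (hla.trans (Subgraph.induce_mono_right Set.subset_union_left))
      (hlb.trans (Subgraph.induce_mono_right Set.subset_union_right))) ⟨by simpa using hsub, ?_⟩
    intro a b hab
    rw [Subgraph.induce_adj]
    have hG : G.Adj a b := (G.subgraphOfAdj huv).adj_sub hab
    rcases Sym2.eq_iff.mp (hab : s(u, v) = s(a, b)) with ⟨h1, h2⟩ | ⟨h1, h2⟩
    · exact ⟨h1 ▸ Or.inl hu, h2 ▸ Or.inr hv, by simpa using hG⟩
    · exact ⟨h2 ▸ Or.inr hv, h1 ▸ Or.inl hu, by simpa using hG⟩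
  have hverts : (Ta ⊔ Tb ⊔ G.subgraphOfAdj huv).verts = Va ∪ Vb := by
    simp only [Subgraph.verts_sup, hva', subgraphOfAdj_verts]
    rw [hvb']
    exact Set.union_eq_left.mpr hsub
  have hca : Ta.Connected := ⟨hta.1⟩
  have hcb : Tb.Connected := ⟨htb.1⟩
  have hconn : (Ta ⊔ Tb ⊔ G.subgraphOfAdj huv).Connected := by
    rw [sup_right_comm]
    refine Subgraph.connected_sup
      (Subgraph.connected_sup hca.preconnected (Subgraph.subgraphOfAdj_connected huv).preconnected ?_).preconnected hcb.preconnected ?_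
    · exact ⟨u, by rw [Subgraph.verts_inf, hva']; exact ⟨hu, by simp⟩⟩
    · refine ⟨v, ?_⟩
      rw [Subgraph.verts_inf, Subgraph.verts_sup, hvb']
      exact ⟨Or.inr (by simp), hv⟩
  have hacy : (Ta ⊔ Tb ⊔ G.subgraphOfAdj huv).coe.IsAcyclic := by
    rw [coe_acyclic_iff]
    refine join_acyclic hdisj hu hv (Ga := Ta.spanningCoe) (Gb := Tb.spanningCoe)
      (fun a b h => adj_side hla h) (fun a b h => adj_side hlb h)
      (coe_acyclic_iff.mp hta.2) (coe_acyclic_iff.mp htb.2) ?_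
    intro a b
    constructor
    · intro h
      rcases Subgraph.sup_adj.mp h with h' | h'
      · rcases Subgraph.sup_adj.mp h' with h'' | h''
        · exact Or.inl h''
        · exact Or.inr (Or.inl h'')
      · exact Or.inr (Or.inr (Eq.symm (h' : s(u, v) = s(a, b))))
    · rintro (h | h | h)
      · exact Subgraph.sup_adj.mpr (Or.inl (Subgraph.sup_adj.mpr (Or.inl h)))
      · exact Subgraph.sup_adj.mpr (Or.inl (Subgraph.sup_adj.mpr (Or.inr h)))
      · exact Subgraph.sup_adj.mpr (Or.inr (show s(u, v) = s(a, b) from h.symm))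
  exact ⟨hle, hverts, hconn.coe, hacy⟩

lemma induce_left {Va Vb : Set V} (hdisj : Disjoint Va Vb)
    {u v : V} (huv : G.Adj u v) (hv : v ∈ Vb)
    {Ta Tb : G.Subgraph} (hlb : Tb ≤ ind G Vb) {S : Set V} (hS : S ⊆ Va) :
    (Ta ⊔ Tb ⊔ G.subgraphOfAdj huv).induce S = Ta.induce S := by
  refine Subgraph.ext rfl ?_
  ext a b
  simp only [Subgraph.induce_adj, Subgraph.sup_adj, subgraphOfAdj_adj]
  constructor
  · rintro ⟨ha, hb, (h | h) | h⟩
    · exact ⟨ha, hb, h⟩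
    · exact absurd (adj_side hlb h).1 (fun hq => Set.disjoint_left.mp hdisj (hS ha) hq)
    · rcases Sym2.eq_iff.mp h with ⟨h1, h2⟩ | ⟨h1, h2⟩
      · exact absurd (hS (h2 ▸ hb)) (fun hq => Set.disjoint_left.mp hdisj hq hv)
      · exact absurd (hS (h2 ▸ ha)) (fun hq => Set.disjoint_left.mp hdisj hq hv)
  · rintro ⟨ha, hb, h⟩
    exact ⟨ha, hb, Or.inl (Or.inl h)⟩

lemma induce_right {Va Vb : Set V} (hdisj : Disjoint Va Vb)
    {u v : V} (huv : G.Adj u v) (hu : u ∈ Va)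
    {Ta Tb : G.Subgraph} (hla : Ta ≤ ind G Va) {S : Set V} (hS : S ⊆ Vb) :
    (Ta ⊔ Tb ⊔ G.subgraphOfAdj huv).induce S = Tb.induce S := by
  refine Subgraph.ext rfl ?_
  ext a b
  simp only [Subgraph.induce_adj, Subgraph.sup_adj, subgraphOfAdj_adj]
  constructor
  · rintro ⟨ha, hb, (h | h) | h⟩
    · exact absurd (adj_side hla h).1 (fun hq => Set.disjoint_left.mp hdisj hq (hS ha))
    · exact ⟨ha, hb, h⟩
    · rcases Sym2.eq_iff.mp h with ⟨h1, h2⟩ | ⟨h1, h2⟩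
      · exact absurd (hS (h1 ▸ ha)) (fun hq => Set.disjoint_left.mp hdisj hu hq)
      · exact absurd (hS (h1 ▸ hb)) (fun hq => Set.disjoint_left.mp hdisj hu hq)
  · rintro ⟨ha, hb, h⟩
    exact ⟨ha, hb, Or.inl (Or.inr h)⟩

lemma induce_join {Va Vb : Set V} (hdisj : Disjoint Va Vb)
    {u v : V} (huv : G.Adj u v)
    {Ta Tb : G.Subgraph} (hla : Ta ≤ ind G Va) (hlb : Tb ≤ ind G Vb)
    {Sa Sb : Set V} (hSa : Sa ⊆ Va) (hSb : Sb ⊆ Vb) (huS : u ∈ Sa) (hvS : v ∈ Sb) :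
    (Ta ⊔ Tb ⊔ G.subgraphOfAdj huv).induce (Sa ∪ Sb) =
      Ta.induce Sa ⊔ Tb.induce Sb ⊔ G.subgraphOfAdj huv := by
  refine Subgraph.ext ?_ ?_
  · simp only [Subgraph.induce_verts, Subgraph.verts_sup, subgraphOfAdj_verts]
    exact (Set.union_eq_left.mpr
      (by rintro w (rfl | rfl); exacts [Or.inl huS, Or.inr hvS])).symm
  · ext a b
    simp only [Subgraph.induce_adj, Subgraph.sup_adj, subgraphOfAdj_adj, Set.mem_union]
    constructor
    · rintro ⟨ha, hb, (h | h) | h⟩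
      · have h1 := (adj_side hla h).1
        have h2 := (adj_side hla h).2
        have ha' : a ∈ Sa := ha.resolve_right fun hq => Set.disjoint_left.mp hdisj h1 (hSb hq)
        have hb' : b ∈ Sa := hb.resolve_right fun hq => Set.disjoint_left.mp hdisj h2 (hSb hq)
        exact Or.inl (Or.inl ⟨ha', hb', h⟩)
      · have h1 := (adj_side hlb h).1
        have h2 := (adj_side hlb h).2
        have ha' : a ∈ Sb := ha.resolve_left fun hq => Set.disjoint_left.mp hdisj (hSa hq) h1
        have hb' : b ∈ Sb := hb.resolve_left fun hq => Set.disjoint_left.mp hdisj (hSa hq) h2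
        exact Or.inl (Or.inr ⟨ha', hb', h⟩)
      · exact Or.inr h
    · rintro ((⟨ha, hb, h⟩ | ⟨ha, hb, h⟩) | h)
      · exact ⟨Or.inl ha, Or.inl hb, Or.inl (Or.inl h)⟩
      · exact ⟨Or.inr ha, Or.inr hb, Or.inl (Or.inr h)⟩
      · rcases Sym2.eq_iff.mp h with ⟨h1, h2⟩ | ⟨h1, h2⟩
        · exact ⟨h1 ▸ Or.inl huS, h2 ▸ Or.inr hvS, Or.inr h⟩
        · exact ⟨h2 ▸ Or.inr hvS, h1 ▸ Or.inl huS, Or.inr h⟩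

lemma not_hier {A : Type*} [Fintype A] (G : SimpleGraph V) (η : V → A) {Va Vb : Set V}
    (hdisj : Disjoint Va Vb) {u v : V} (huv : G.Adj u v)
    {Ta Tb : G.Subgraph} (hla : Ta ≤ ind G Va) (hlb : Tb ≤ ind G Vb)
    {a : A} (ha : a ∈ unitSet η Va) (hb : a ∈ unitSet η Vb)
    (hne : ¬(η u = a ∧ η v = a)) :
    ¬IsHierTree G η (Ta ⊔ Tb ⊔ G.subgraphOfAdj huv) (Va ∪ Vb) := by
  intro h
  obtain ⟨p, hpV, hpa⟩ := ha
  obtain ⟨q, hqV, hqa⟩ := hb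
  have hpS : p ∈ (Va ∪ Vb) ∩ η ⁻¹' {a} := ⟨Or.inl hpV, hpa⟩
  have hqS : q ∈ (Va ∪ Vb) ∩ η ⁻¹' {a} := ⟨Or.inr hqV, hqa⟩
  obtain ⟨hle, hverts, htree⟩ := h.2 a ⟨p, hpS⟩
  set T' := (Ta ⊔ Tb ⊔ G.subgraphOfAdj huv).induce ((Va ∪ Vb) ∩ η ⁻¹' {a}) with hT'
  have hreach : T'.coe.Reachable ⟨p, hpS⟩ ⟨q, hqS⟩ := htree.1.preconnected _ _
  have hinv : ∀ ⦃x y : T'.verts⦄, T'.coe.Adj x y → ((x : V) ∈ Va ↔ (y : V) ∈ Va) := by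
    rintro ⟨x, hxS⟩ ⟨y, hyS⟩ hxy
    have hxy' : T'.Adj x y := hxy
    rw [hT', Subgraph.induce_adj] at hxy'
    rcases Subgraph.sup_adj.mp hxy'.2.2 with h' | h'
    · rcases Subgraph.sup_adj.mp h' with h'' | h''
      · exact iff_of_true (adj_side hla h'').1 (adj_side hla h'').2
      · exact iff_of_false
          (fun hq => Set.disjoint_left.mp hdisj hq (adj_side hlb h'').1)
          (fun hq => Set.disjoint_left.mp hdisj hq (adj_side hlb h'').2)
    · exfalso
      rcases Sym2.eq_iff.mp (h' : s(u, v) = s(x, y)) with ⟨h1, h2⟩ | ⟨h1, h2⟩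
      · exact hne ⟨h1 ▸ hxS.2, h2 ▸ hyS.2⟩
      · exact hne ⟨h1 ▸ hyS.2, h2 ▸ hxS.2⟩
  have hqVa : q ∈ Va := reach_side (P := Subtype.val ⁻¹' Va) hinv hreach hpV
  exact Set.disjoint_left.mp hdisj hqVa hqV

lemma unit_side {A : Type*} [Fintype A] (G : SimpleGraph V) (η : V → A) {Va Vb : Set V}
    (hdisj : Disjoint Va Vb) {u v : V} (huv : G.Adj u v) (hu : u ∈ Va) (hv : v ∈ Vb)
    {Ta Tb : G.Subgraph} (hTa : IsHierTree G η Ta Va) (hTb : IsHierTree G η Tb Vb)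
    (a : A) (hnot : ¬(a ∈ unitSet η Va ∧ a ∈ unitSet η Vb))
    (hSne : ((Va ∪ Vb) ∩ η ⁻¹' {a}).Nonempty) :
    IsSpanningTreeOf G ((Ta ⊔ Tb ⊔ G.subgraphOfAdj huv).induce ((Va ∪ Vb) ∩ η ⁻¹' {a}))
      (ind G ((Va ∪ Vb) ∩ η ⁻¹' {a})) := by
  rw [Set.union_inter_distrib_right]
  by_cases hA : (Va ∩ η ⁻¹' {a}).Nonempty
  · have hB : Vb ∩ η ⁻¹' {a} = ∅ := by
      by_contra hB
      exact hnot ⟨hA, Set.nonempty_iff_ne_empty.mpr hB⟩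
    rw [hB, Set.union_empty, induce_left hdisj huv hv hTb.1.1 Set.inter_subset_left]
    exact hTa.2 a hA
  · have hA' : Va ∩ η ⁻¹' {a} = ∅ := Set.not_nonempty_iff_eq_empty.mp hA
    have hB : (Vb ∩ η ⁻¹' {a}).Nonempty := by
      obtain ⟨w, hw⟩ := hSne
      rw [Set.union_inter_distrib_right, hA', Set.empty_union] at hw
      exact ⟨w, hw⟩
    rw [hA', Set.empty_union, induce_right hdisj huv hu hTa.1.1 Set.inter_subset_left]
    exact hTb.2 a hB

/-- Joining hierarchical trees on two disjoint, adjacent, hierarchically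
connected regions by an edge `e = (u, v)`: with `x = η u`, `y = η v`, and `U_a, U_b` the
administrative units meeting each region, the join `T = T_a ∪ {e} ∪ T_b` is a
hierarchical tree on the merged region in cases (1) `x = y` and `U_a ∩ U_b = {x}`,
(2) `x ≠ y` and `U_a ∩ U_b = ∅`; and it is not in cases (3) `|U_a ∩ U_b| > 1`,
(4) `x ≠ y` and `U_a ∩ U_b ≠ ∅`. -/
theorem stmt_15 {A : Type*} [Fintype A] (G : SimpleGraph V) (η : V → A)
    (Va Vb : Set V) (hna : Va.Nonempty) (hnb : Vb.Nonempty)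
    (hca : (ind G Va).Connected) (hcb : (ind G Vb).Connected)
    (hdisj : Disjoint Va Vb) (hadj : (crossEdges G Va Vb).Nonempty)
    (hha : HierConnectedBlock G η Va) (hhb : HierConnectedBlock G η Vb)
    (Ta Tb : G.Subgraph) (hTa : IsHierTree G η Ta Va) (hTb : IsHierTree G η Tb Vb)
    (u v : V) (huv : G.Adj u v) (hu : u ∈ Va) (hv : v ∈ Vb) :
    (η u = η v ∧ unitSet η Va ∩ unitSet η Vb = {η u} →
      IsHierTree G η (Ta ⊔ Tb ⊔ G.subgraphOfAdj huv) (Va ∪ Vb)) ∧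
    (η u ≠ η v ∧ unitSet η Va ∩ unitSet η Vb = ∅ →
      IsHierTree G η (Ta ⊔ Tb ⊔ G.subgraphOfAdj huv) (Va ∪ Vb)) ∧
    (1 < (unitSet η Va ∩ unitSet η Vb).ncard →
      ¬IsHierTree G η (Ta ⊔ Tb ⊔ G.subgraphOfAdj huv) (Va ∪ Vb)) ∧
    (η u ≠ η v ∧ (unitSet η Va ∩ unitSet η Vb).Nonempty →
      ¬IsHierTree G η (Ta ⊔ Tb ⊔ G.subgraphOfAdj huv) (Va ∪ Vb)) := by
  have hla : Ta ≤ ind G Va := hTa.1.1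
  have hlb : Tb ≤ ind G Vb := hTb.1.1
  refine ⟨?_, ?_, ?_, ?_⟩
  · rintro ⟨hxy, hU⟩
    refine ⟨join_spanning G hdisj huv hu hv hTa.1 hTb.1, ?_⟩
    intro a hSne
    by_cases hax : a = η u
    · subst hax
      have huSa : u ∈ Va ∩ η ⁻¹' {η u} := ⟨hu, rfl⟩
      have hvSb : v ∈ Vb ∩ η ⁻¹' {η u} := ⟨hv, Set.mem_singleton_iff.mpr hxy.symm⟩
      rw [Set.union_inter_distrib_right,
        induce_join hdisj huv hla hlb Set.inter_subset_left Set.inter_subset_left huSa hvSb]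
      exact join_spanning G (hdisj.mono Set.inter_subset_left Set.inter_subset_left) huv
        huSa hvSb (hTa.2 _ ⟨u, huSa⟩) (hTb.2 _ ⟨v, hvSb⟩)
    · refine unit_side G η hdisj huv hu hv hTa hTb a (fun hmem => hax ?_) hSne
      exact (Set.ext_iff.mp hU a).mp ⟨hmem.1, hmem.2⟩
  · rintro ⟨hxy, hU⟩
    refine ⟨join_spanning G hdisj huv hu hv hTa.1 hTb.1, ?_⟩
    intro a hSne
    refine unit_side G η hdisj huv hu hv hTa hTb a (fun hmem => ?_) hSne
    have hmem2 : a ∈ unitSet η Va ∩ unitSet η Vb := ⟨hmem.1, hmem.2⟩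
    rw [hU] at hmem2
    exact hmem2
  · intro hcard
    obtain ⟨aa, haa, bb, hbb, hab⟩ := (Set.one_lt_ncard (Set.toFinite _)).mp hcard
    by_cases h1 : η u = aa ∧ η v = aa
    · exact not_hier G η hdisj huv hla hlb hbb.1 hbb.2
        (fun h2 => hab (h1.1.symm.trans h2.1))
    · exact not_hier G η hdisj huv hla hlb haa.1 haa.2 h1
  · rintro ⟨hxy, a, ha⟩
    exact not_hier G η hdisj huv hla hlb ha.1 ha.2
      (fun h2 => hxy (h2.1.trans h2.2.symm))

end Redist
end
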